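/- Let n be a positive integer, a, b ∈ Mat_n(ℂ) with [a, b] = −2b, and let f, g : ℂ → Mat_n(ℂ) be differentiable functions satisfying f'(x) = −f² + g − (x/2)·I − b and g'(x) = 3fg − gf − 2[f, b] + a for all x ∈ ℂ. Then y = f is twice differentiable and satisfies the matrix Painlevé-2 equation P₂²: y'' = 2[y, y'] + 2y³ + x y + b y + y b + (a − (1/2)·I). -/

import Mathlib

attribute [local instance] Matrix.linftyOpNormedAddCommGroup Matrix.linftyOpNormedSpace
attribute [local instance] Matrix.linftyOpNormedRing Matrix.linftyOpNormedAlgebra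

/-- If `[a, b] = −2b` and `f, g` solve `f' = −f² + g − (x/2)I − b`,
`g' = 3fg − gf − 2[f, b] + a`, then `y = f` satisfies the matrix Painlevé-2 equation P₂²:
`y'' = 2[y, y'] + 2y³ + xy + by + yb + (a − (1/2)I)`. -/
theorem matrix_P22_from_degeneration (n : ℕ) (hn : 0 < n)
    (a b : Matrix (Fin n) (Fin n) ℂ) (hab : a * b - b * a = -(2 : ℂ) • b)
    (f g : ℂ → Matrix (Fin n) (Fin n) ℂ)
    (hf : ∀ x : ℂ, HasDerivAt f (-(f x) ^ 2 + g x - (x / 2) • 1 - b) x)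
    (hg : ∀ x : ℂ, HasDerivAt g
      (3 * (f x * g x) - g x * f x - 2 * (f x * b - b * f x) + a) x) :
    ∀ x : ℂ, HasDerivAt (deriv f)
      ((2 : ℂ) • (f x * deriv f x - deriv f x * f x) + 2 * (f x) ^ 3 + x • f x
        + b * f x + f x * b + (a - (1 / 2 : ℂ) • 1)) x := by
  intro x
  have hd : deriv f = fun y => -(f y) ^ 2 + g y - (y / 2) • (1 : Matrix (Fin n) (Fin n) ℂ) - b :=
    funext fun y => (hf y).deriv
  set F := -(f x) ^ 2 + g x - (x / 2) • (1 : Matrix (Fin n) (Fin n) ℂ) - b with hF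
  -- derivative of f y * f y
  have hsq : HasDerivAt (fun y => (f y) ^ 2) (F * f x + f x * F) x := by
    rw [hF]
    have h : HasDerivAt (fun y => f y * f y) (F * f x + f x * F) x := (hf x).mul (hf x)
    rw [hF] at h
    simp only [pow_two] at h ⊢
    exact h
  have hlin : HasDerivAt (fun y : ℂ => (y / 2) • (1 : Matrix (Fin n) (Fin n) ℂ))
      ((1 / 2 : ℂ) • (1 : Matrix (Fin n) (Fin n) ℂ)) x := by
    have h := ((hasDerivAt_id x).div_const 2).smul_const (1 : Matrix (Fin n) (Fin n) ℂ)
    simp only [id, one_div] at h ⊢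
    exact h
  have hD : HasDerivAt (fun y => -(f y) ^ 2 + g y - (y / 2) • (1 : Matrix (Fin n) (Fin n) ℂ) - b)
      (-(F * f x + f x * F) + (3 * (f x * g x) - g x * f x - 2 * (f x * b - b * f x) + a)
        - (1 / 2 : ℂ) • (1 : Matrix (Fin n) (Fin n) ℂ)) x := by
    have h := ((hsq.neg.add (hg x)).sub hlin).sub_const b
    exact h
  rw [hd]
  convert hD using 1
  simp only [hF]
  have h3 : (3 : Matrix (Fin n) (Fin n) ℂ) = (3 : ℂ) • 1 := by
    rw [Algebra.smul_def, mul_one]; exact (map_ofNat _ 3).symm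
  have h2 : (2 : Matrix (Fin n) (Fin n) ℂ) = (2 : ℂ) • 1 := by
    rw [Algebra.smul_def, mul_one]; exact (map_ofNat _ 2).symm
  rw [h3, h2]
  simp only [mul_add, add_mul, mul_sub, sub_mul, neg_mul, mul_neg, smul_mul_assoc,
    mul_smul_comm, smul_smul, smul_sub, smul_add, smul_neg, mul_assoc, pow_succ, pow_one, pow_zero,
    one_mul, mul_one]
  module
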